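/- For any rooted graph G_*^v with root v and any N ≥ |V(G)|, X_0(G_*^v;x_0,x_1,…,x_N) = Σ_{S ⊆ E(G)} (−1)^{|S|} · p_{λ_v^-(G_S)}(x_0,x_1,…,x_N) · x_0^{λ_v^+(G_S)}. -/

import Mathlib

open MvPolynomial

attribute [local instance 10] Classical.propDecidable

/-- The finset of proper colorings of `G` with color set `Fin C`. -/
noncomputable def properColorings {V : Type} [Fintype V] (G : SimpleGraph V) (C : ℕ) :
    Finset (V → Fin C) :=
  Finset.univ.filter fun κ => ∀ u w, G.Adj u w → κ u ≠ κ w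

/-- `X_0(G_*; x_0,…,x_N)`: weighted sum over proper colorings with color set `{0,…,N}`
in which the root `r` gets color `0`. -/
noncomputable def X0 {V : Type} [Fintype V] (G : SimpleGraph V) (r : V) (N : ℕ) :
    MvPolynomial (Fin (N+1)) ℚ :=
  ∑ κ ∈ (properColorings G (N+1)).filter (fun κ => κ r = 0), ∏ v : V, X (κ v)

/-- The power sum `p_k(x_0,…,x_N) = x_0^k + ⋯ + x_N^k`. -/
noncomputable def psum (N k : ℕ) : MvPolynomial (Fin (N+1)) ℚ :=
  ∑ i : Fin (N+1), X i ^ k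

/-- The number of vertices in the connected component `c` of `H`. -/
noncomputable def compCard {V : Type} [Fintype V] (H : SimpleGraph V)
    (c : H.ConnectedComponent) : ℕ :=
  (Finset.univ.filter (fun v => H.connectedComponentMk v = c)).card

/-- Constancy on the edges of `S` is equivalent to constancy on the connected
components of `fromEdgeSet S`. -/
lemma const_iff {V : Type} {α : Type*} (S : Finset (Sym2 V)) (κ : V → α) :
    (∀ e ∈ S, (e.map κ).IsDiag) ↔
      ∀ u w : V, (SimpleGraph.fromEdgeSet (↑S : Set (Sym2 V))).connectedComponentMk u =
        (SimpleGraph.fromEdgeSet (↑S : Set (Sym2 V))).connectedComponentMk w → κ u = κ w := by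
  constructor
  · intro h u w hc
    rw [SimpleGraph.ConnectedComponent.eq] at hc
    obtain ⟨p⟩ := hc
    induction p with
    | nil => rfl
    | cons ha p ih =>
      rename_i a b c
      have hab : s(a, b) ∈ S := by
        have := (SimpleGraph.fromEdgeSet_adj (↑S : Set (Sym2 V))).1 ha
        exact_mod_cast this.1
      have := h _ hab
      rw [Sym2.map_pair_eq, Sym2.mk_isDiag_iff] at this
      exact this.trans ih
  · intro h e he
    induction e with
    | _ a b =>
      rw [Sym2.map_pair_eq, Sym2.mk_isDiag_iff]
      by_cases hab : a = b
      · rw [hab]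
      · apply h
        apply SimpleGraph.ConnectedComponent.sound
        exact SimpleGraph.Adj.reachable
          ((SimpleGraph.fromEdgeSet_adj (↑S : Set (Sym2 V))).2 ⟨by exact_mod_cast he, hab⟩)

/-- Sum of weights over colorings that are constant on the connected components of `H`
and give the root color `0`. -/
lemma sumconst {V : Type} [Fintype V] (H : SimpleGraph V) (v : V) (N : ℕ) :
    ∑ κ ∈ Finset.univ.filter (fun κ : V → Fin (N+1) => κ v = 0 ∧
        ∀ u w : V, H.connectedComponentMk u = H.connectedComponentMk w → κ u = κ w),
      ∏ u : V, X (κ u)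
    = (∏ c ∈ (Finset.univ : Finset H.ConnectedComponent).erase (H.connectedComponentMk v),
        psum N (compCard H c)) * (X 0 : MvPolynomial (Fin (N+1)) ℚ) ^
          compCard H (H.connectedComponentMk v) := by
  classical
  set cv := H.connectedComponentMk v with hcv
  set t : H.ConnectedComponent → Finset (Fin (N+1)) :=
    fun c => if c = cv then {0} else Finset.univ with ht
  have hRHS : (∏ c : H.ConnectedComponent,
        ∑ j ∈ t c, (X j : MvPolynomial (Fin (N+1)) ℚ) ^ compCard H c)
      = (∏ c ∈ (Finset.univ : Finset H.ConnectedComponent).erase cv,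
        psum N (compCard H c)) * (X 0 : MvPolynomial (Fin (N+1)) ℚ) ^ compCard H cv := by
    rw [← Finset.mul_prod_erase Finset.univ _ (Finset.mem_univ cv), mul_comm]
    congr 1
    · apply Finset.prod_congr rfl
      intro c hc
      have h1 : t c = Finset.univ := by
        simp only [ht]; rw [if_neg (Finset.ne_of_mem_erase hc)]
      rw [h1]; rfl
    · simp only [ht, if_pos rfl, Finset.sum_singleton]
  rw [← hRHS, Finset.prod_univ_sum]
  apply Finset.sum_nbij' (i := fun κ => fun c : H.ConnectedComponent => κ c.out)
    (j := fun f => fun u => f (H.connectedComponentMk u))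
  · intro κ hκ
    simp only [Finset.mem_filter, Finset.mem_univ, true_and] at hκ
    rw [Fintype.mem_piFinset]
    intro c
    simp only [ht]
    by_cases hc : c = cv
    · rw [if_pos hc, Finset.mem_singleton, hc]
      have h2 : κ cv.out = κ v := hκ.2 _ _ cv.out_eq
      rw [h2, hκ.1]
    · rw [if_neg hc]; exact Finset.mem_univ _
  · intro f hf
    rw [Fintype.mem_piFinset] at hf
    simp only [Finset.mem_filter, Finset.mem_univ, true_and]
    constructor
    · have h3 := hf cv
      simp only [ht, if_pos rfl, Finset.mem_singleton] at h3
      exact h3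
    · intro u w h; rw [h]
  · intro κ hκ
    simp only [Finset.mem_filter, Finset.mem_univ, true_and] at hκ
    funext u
    exact hκ.2 _ _ (H.connectedComponentMk u).out_eq
  · intro f hf
    funext c
    exact congrArg f c.out_eq
  · intro κ hκ
    simp only [Finset.mem_filter, Finset.mem_univ, true_and] at hκ
    rw [← Finset.prod_fiberwise Finset.univ (fun u => H.connectedComponentMk u)
      (fun u => (X (κ u) : MvPolynomial (Fin (N+1)) ℚ))]
    apply Finset.prod_congr rfl
    intro c _
    rw [compCard, Finset.prod_congr rfl (fun u hu => ?_), Finset.prod_const]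
    simp only [Finset.mem_filter, Finset.mem_univ, true_and] at hu
    congr 1
    exact hκ.2 _ _ (hu.trans c.out_eq.symm)

/-- Power-sum expansion of the rooted chromatic polynomial:
`X_0(G_*^v) = Σ_{S ⊆ E(G)} (−1)^{|S|} p_{λ_v^-(G_S)}(x_0,…,x_N) x_0^{λ_v^+(G_S)}`,
where `G_S` is the spanning subgraph with edge set `S`, `λ_v^+(G_S)` is the size of the
component of `v`, and `p_{λ_v^-(G_S)}` is the product of power sums over the remaining
components. -/
theorem stmt17 {V : Type} [Fintype V] (G : SimpleGraph V) (v : V) (N : ℕ)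
    (hN : Fintype.card V ≤ N) :
    X0 G v N =
      ∑ S ∈ G.edgeFinset.powerset,
        (-1 : MvPolynomial (Fin (N+1)) ℚ) ^ S.card *
          ((∏ c ∈ (Finset.univ :
                Finset (SimpleGraph.fromEdgeSet (↑S : Set (Sym2 V))).ConnectedComponent).erase
                ((SimpleGraph.fromEdgeSet (↑S : Set (Sym2 V))).connectedComponentMk v),
              psum N (compCard (SimpleGraph.fromEdgeSet (↑S : Set (Sym2 V))) c)) *
            X 0 ^ compCard (SimpleGraph.fromEdgeSet (↑S : Set (Sym2 V)))
              ((SimpleGraph.fromEdgeSet (↑S : Set (Sym2 V))).connectedComponentMk v)) := by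
  classical
  set ind : (V → Fin (N+1)) → Sym2 V → MvPolynomial (Fin (N+1)) ℚ :=
    fun κ e => if (e.map κ).IsDiag then 1 else 0 with hind
  have stepA : X0 G v N = ∑ κ ∈ Finset.univ.filter (fun κ : V → Fin (N+1) => κ v = 0),
      (∏ u : V, X (κ u)) * ∏ e ∈ G.edgeFinset, (1 - ind κ e) := by
    rw [X0, properColorings, Finset.filter_filter]
    rw [show (Finset.univ.filter fun κ : V → Fin (N+1) =>
        (∀ u w, G.Adj u w → κ u ≠ κ w) ∧ κ v = 0)
      = (Finset.univ.filter (fun κ : V → Fin (N+1) => κ v = 0)).filter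
          (fun κ => ∀ u w, G.Adj u w → κ u ≠ κ w) by
        rw [Finset.filter_filter]; apply Finset.filter_congr; intro κ _; tauto]
    rw [Finset.sum_filter]
    apply Finset.sum_congr rfl
    intro κ _
    by_cases hp : ∀ u w, G.Adj u w → κ u ≠ κ w
    · rw [if_pos hp]
      have h1 : ∏ e ∈ G.edgeFinset, (1 - ind κ e) = 1 := by
        apply Finset.prod_eq_one
        intro e he
        rw [SimpleGraph.mem_edgeFinset] at he
        have h2 : ¬ (e.map κ).IsDiag := by
          induction e with
          | _ a b =>
            rw [Sym2.map_pair_eq, Sym2.mk_isDiag_iff]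
            exact hp a b ((SimpleGraph.mem_edgeSet G).1 he)
        rw [hind]; simp [h2]
      rw [h1, mul_one]
    · rw [if_neg hp]
      push_neg at hp
      obtain ⟨u, w, hadj, heq⟩ := hp
      have he : s(u, w) ∈ G.edgeFinset := by
        rw [SimpleGraph.mem_edgeFinset]; exact hadj
      have h3 : ∏ e ∈ G.edgeFinset, (1 - ind κ e) = 0 := by
        apply Finset.prod_eq_zero he
        have h4 : (Sym2.map κ s(u, w)).IsDiag := by
          rw [Sym2.map_pair_eq, Sym2.mk_isDiag_iff]; exact heq
        rw [hind]; simp [heq]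
      rw [h3, mul_zero]
  rw [stepA]
  have stepB : ∀ κ : V → Fin (N+1), ∏ e ∈ G.edgeFinset, (1 - ind κ e)
      = ∑ S ∈ G.edgeFinset.powerset,
          (-1 : MvPolynomial (Fin (N+1)) ℚ) ^ S.card * ∏ e ∈ S, ind κ e := by
    intro κ
    have h5 : ∀ e : Sym2 V, (1 : MvPolynomial (Fin (N+1)) ℚ) - ind κ e = -ind κ e + 1 := by
      intro e; ring
    simp only [h5]
    rw [Finset.prod_add]
    apply Finset.sum_congr rfl
    intro S _
    rw [Finset.prod_const_one, mul_one]
    rw [show (fun e => -ind κ e) = fun e => (-1 : MvPolynomial (Fin (N+1)) ℚ) * ind κ e by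
      funext e; ring]
    rw [Finset.prod_mul_distrib, Finset.prod_const]
  simp only [stepB, Finset.mul_sum]
  rw [Finset.sum_comm]
  apply Finset.sum_congr rfl
  intro S hS
  have hprod : ∀ κ : V → Fin (N+1), ∏ e ∈ S, ind κ e
      = if (∀ u w : V, (SimpleGraph.fromEdgeSet (↑S : Set (Sym2 V))).connectedComponentMk u =
          (SimpleGraph.fromEdgeSet (↑S : Set (Sym2 V))).connectedComponentMk w → κ u = κ w)
        then 1 else 0 := by
    intro κ
    by_cases hc : ∀ e ∈ S, (Sym2.map κ e).IsDiag
    · rw [if_pos ((const_iff S κ).1 hc)]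
      apply Finset.prod_eq_one
      intro e he
      rw [hind]; simp [hc e he]
    · rw [if_neg (fun h => hc ((const_iff S κ).2 h))]
      push_neg at hc
      obtain ⟨e, he, hne⟩ := hc
      apply Finset.prod_eq_zero he
      rw [hind]; simp [hne]
  calc ∑ κ ∈ Finset.univ.filter (fun κ : V → Fin (N+1) => κ v = 0),
        (∏ u : V, X (κ u)) * ((-1 : MvPolynomial (Fin (N+1)) ℚ) ^ S.card * ∏ e ∈ S, ind κ e)
      = (-1 : MvPolynomial (Fin (N+1)) ℚ) ^ S.card *
        ∑ κ ∈ Finset.univ.filter (fun κ : V → Fin (N+1) => κ v = 0 ∧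
          ∀ u w : V, (SimpleGraph.fromEdgeSet (↑S : Set (Sym2 V))).connectedComponentMk u =
            (SimpleGraph.fromEdgeSet (↑S : Set (Sym2 V))).connectedComponentMk w → κ u = κ w),
          ∏ u : V, X (κ u) := by
        rw [Finset.mul_sum]
        rw [show (Finset.univ.filter (fun κ : V → Fin (N+1) => κ v = 0 ∧
            ∀ u w : V, (SimpleGraph.fromEdgeSet (↑S : Set (Sym2 V))).connectedComponentMk u =
              (SimpleGraph.fromEdgeSet (↑S : Set (Sym2 V))).connectedComponentMk w → κ u = κ w))
          = (Finset.univ.filter (fun κ : V → Fin (N+1) => κ v = 0)).filter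
              (fun κ => ∀ u w : V,
                (SimpleGraph.fromEdgeSet (↑S : Set (Sym2 V))).connectedComponentMk u =
                (SimpleGraph.fromEdgeSet (↑S : Set (Sym2 V))).connectedComponentMk w → κ u = κ w)
            from by rw [Finset.filter_filter]]
        rw [Finset.sum_filter (fun κ : V → Fin (N+1) => ∀ u w : V,
            (SimpleGraph.fromEdgeSet (↑S : Set (Sym2 V))).connectedComponentMk u =
            (SimpleGraph.fromEdgeSet (↑S : Set (Sym2 V))).connectedComponentMk w → κ u = κ w)
          (fun κ => (-1 : MvPolynomial (Fin (N+1)) ℚ) ^ S.card * ∏ u : V, X (κ u))]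
        apply Finset.sum_congr rfl
        intro κ _
        rw [hprod κ]
        by_cases hκ : ∀ u w : V,
            (SimpleGraph.fromEdgeSet (↑S : Set (Sym2 V))).connectedComponentMk u =
            (SimpleGraph.fromEdgeSet (↑S : Set (Sym2 V))).connectedComponentMk w → κ u = κ w
        · rw [if_pos hκ, if_pos hκ, mul_one]; ring
        · rw [if_neg hκ, if_neg hκ, mul_zero, mul_zero]
    _ = _ := by rw [sumconst (SimpleGraph.fromEdgeSet (↑S : Set (Sym2 V))) v N]; congr!
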